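/- Let n ≥ 1 and let Φ, Ψ be invertible n×n complex matrices. Assume there is μ ∈ ℂ which is a primitive n-th root of unity such that Φ * Ψ = μ • (Ψ * Φ), and assume the characteristic polynomial of Φ has n distinct roots. Then the eigenvalues of Φ form a geometric progression with ratio μ: there exists a nonzero φ ∈ ℂ such that the multiset of roots of the characteristic polynomial of Φ equals the multiset of the n values φ·μ^0, φ·μ^1, …, φ·μ^{n−1} (each occurring once). -/
import Mathlib

open Polynomial Matrix

lemma eval_charpoly' {n : ℕ} (M : Matrix (Fin n) (Fin n) ℂ) (x : ℂ) :
    M.charpoly.eval x = (x • (1 : Matrix (Fin n) (Fin n) ℂ) - M).det := by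
  rw [Matrix.charpoly, ← coe_evalRingHom, RingHom.map_det]
  congr 1
  ext i j
  by_cases h : i = j <;>
    simp [h, charmatrix_apply, Matrix.one_apply, Matrix.diagonal_apply]

/-- Key intermediate step of Proposition 3.5 (zsobrenzcuadrado): if Φ Ψ = μ • (Ψ Φ)
with μ a primitive n-th root of unity and Φ has n distinct eigenvalues, then the
eigenvalues of Φ form a geometric progression with ratio μ. -/
theorem stmt_2 (n : ℕ) (hn : 1 ≤ n) (Φ Ψ : Matrix (Fin n) (Fin n) ℂ)
    (hΦ : IsUnit Φ.det) (hΨ : IsUnit Ψ.det)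
    (μ : ℂ) (hμ : IsPrimitiveRoot μ n)
    (hcomm : Φ * Ψ = μ • (Ψ * Φ))
    (hroots : Φ.charpoly.roots.toFinset.card = n) :
    ∃ φ : ℂ, φ ≠ 0 ∧
      Φ.charpoly.roots = (Multiset.range n).map (fun k => φ * μ ^ k) := by
  have hμ0 : μ ≠ 0 := hμ.ne_zero (by omega)
  have hΨu : IsUnit Ψ := (Matrix.isUnit_iff_isUnit_det Ψ).2 hΨ
  -- Φ = μ • (Ψ * Φ * Ψ⁻¹)
  have hconj : Φ = μ • (Ψ * Φ * Ψ⁻¹) := by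
    have := congrArg (· * Ψ⁻¹) hcomm
    simpa [Matrix.mul_assoc, Matrix.mul_nonsing_inv Ψ hΨ, Matrix.smul_mul] using this
  -- functional equation for the characteristic polynomial
  have key : ∀ x : ℂ, Φ.charpoly.eval (μ * x) = μ ^ n * Φ.charpoly.eval x := by
    intro x
    rw [eval_charpoly', eval_charpoly']
    have h1 : (μ * x) • (1 : Matrix (Fin n) (Fin n) ℂ) - Φ
        = μ • (x • (1 : Matrix (Fin n) (Fin n) ℂ) - Ψ * Φ * Ψ⁻¹) := by
      conv_lhs => rw [hconj]
      rw [smul_sub, mul_smul]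
    have h2 : x • (1 : Matrix (Fin n) (Fin n) ℂ) - Ψ * Φ * Ψ⁻¹
        = Ψ * (x • (1 : Matrix (Fin n) (Fin n) ℂ) - Φ) * Ψ⁻¹ := by
      rw [Matrix.mul_sub, Matrix.sub_mul]
      congr 1
      rw [Matrix.mul_smul, Matrix.smul_mul, Matrix.mul_one, Matrix.mul_nonsing_inv Ψ hΨ]
    rw [h1, Matrix.det_smul, h2, Matrix.det_conj hΨu]
    simp
  set p := Φ.charpoly with hp
  have hmonic : p.Monic := Φ.charpoly_monic
  have hdeg : p.natDegree = n := by rw [hp, Φ.charpoly_natDegree_eq_dim, Fintype.card_fin]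
  have hp0 : p ≠ 0 := hmonic.ne_zero
  -- roots are closed under multiplication by μ
  have hclosed : ∀ r : ℂ, r ∈ p.roots → μ * r ∈ p.roots := by
    intro r hr
    rw [mem_roots hp0] at hr ⊢
    show p.eval (μ * r) = 0
    rw [key r, hr, mul_zero]
  -- there is a root
  have hne : p.roots.toFinset.Nonempty := Finset.card_pos.mp (by omega)
  obtain ⟨φ, hφmem⟩ := hne
  rw [Multiset.mem_toFinset] at hφmem
  -- 0 is not a root
  have hφ0 : φ ≠ 0 := by
    rintro rfl
    have : p.eval 0 = 0 := (mem_roots hp0).1 hφmem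
    rw [eval_charpoly'] at this
    simp only [zero_smul, zero_sub, Matrix.det_neg] at this
    apply hΦ.ne_zero
    have : ((-1 : ℂ) ^ n) * Φ.det = 0 := by simpa using this
    rcases mul_eq_zero.mp this with h | h
    · exact absurd h (pow_ne_zero _ (by norm_num))
    · exact h
  refine ⟨φ, hφ0, ?_⟩
  -- each φ * μ ^ k is a root
  have hmem : ∀ k : ℕ, φ * μ ^ k ∈ p.roots := by
    intro k
    induction k with
    | zero => simpa using hφmem
    | succ k ih =>
      have := hclosed _ ih
      convert this using 1
      ring
  -- the multiset of the n values is nodup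
  have hnodup : ((Multiset.range n).map (fun k => φ * μ ^ k)).Nodup := by
    refine Multiset.Nodup.map_on ?_ (Multiset.nodup_range n)
    intro i hi j hj hij
    rw [Multiset.mem_range] at hi hj
    exact hμ.pow_inj hi hj (mul_left_cancel₀ hφ0 hij)
  have hle : (Multiset.range n).map (fun k => φ * μ ^ k) ≤ p.roots := by
    rw [Multiset.le_iff_subset hnodup]
    intro x hx
    obtain ⟨k, _, rfl⟩ := Multiset.mem_map.mp hx
    exact hmem k
  have hcard : Multiset.card p.roots ≤ n := by
    calc Multiset.card p.roots ≤ p.natDegree := p.card_roots'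
    _ = n := hdeg
  have := Multiset.eq_of_le_of_card_le hle (by simpa using hcard)
  exact this.symm
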